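/- There is no element g of the group ISO(2,1) = SO⁺(2,1) ⋉ ℝ³ whose adjoint action on iso(2,1) maps the Cartan subalgebra span{P_0, J_0} onto the Cartan subalgebra span{P_1, J_1}. -/

import Mathlib

open Real BigOperators Finset

noncomputable section

/-- Vectors in ℝ³. -/
abbrev V3 : Type := Fin 3 → ℝ

/-- Minkowski metric η = diag(1,-1,-1). -/
def ηm : Fin 3 → ℝ := ![1, -1, -1]

/-- Totally antisymmetric symbol with ε₀₁₂ = 1. -/
def eps : Fin 3 → Fin 3 → Fin 3 → ℝ := fun a b c =>
  if (a, b, c) = ((0 : Fin 3), (1 : Fin 3), (2 : Fin 3)) ∨ (a, b, c) = (1, 2, 0) ∨ (a, b, c) = (2, 0, 1) then 1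
  else if (a, b, c) = ((0 : Fin 3), (2 : Fin 3), (1 : Fin 3)) ∨ (a, b, c) = (2, 1, 0) ∨ (a, b, c) = (1, 0, 2) then -1
  else 0

/-- An element of iso(2,1) is encoded by its J-coefficients and P-coefficients:
`(j, p)` represents `Σ j^a J_a + Σ p^a P_a`. -/
abbrev iso21 : Type := V3 × V3

def Jvec (x : V3) : iso21 := (x, 0)
def Pvec (x : V3) : iso21 := (0, x)
def Jb (a : Fin 3) : iso21 := Jvec (fun i => if i = a then 1 else 0)
def Pb (a : Fin 3) : iso21 := Pvec (fun i => if i = a then 1 else 0)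

/-- The Lie bracket of iso(2,1): [J_a,J_b] = ε_{ab}^c J_c, [J_a,P_b] = ε_{ab}^c P_c,
[P_a,P_b] = 0, with ε_{ab}^c = η^{cc} ε_{abc}. -/
def br (x y : iso21) : iso21 :=
  (fun c => ∑ a, ∑ b, x.1 a * y.1 b * (ηm c * eps a b c),
   fun c => ∑ a, ∑ b, (x.1 a * y.2 b + x.2 a * y.1 b) * (ηm c * eps a b c))

/-- The Ad-invariant pairing ⟨J_a,P_b⟩ = η_{ab}, ⟨J,J⟩ = ⟨P,P⟩ = 0. -/
def pairing (x y : iso21) : ℝ := ∑ a, ηm a * (x.1 a * y.2 a + x.2 a * y.1 a)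

/-- Minkowski inner product on ℝ³. -/
def mdot (x y : V3) : ℝ := ∑ a, ηm a * x a * y a

/-- Lorentzian cross product (x∧y)^a = ε^{abc} x_b y_c. -/
def crossL (x y : V3) : V3 := fun a => ηm a * ∑ b, ∑ c, eps a b c * x b * y c

/-- Index set of the basis {J_a, P_a}: `false` ↦ J, `true` ↦ P. -/
abbrev Bas : Type := Bool × Fin 3

def basis : Bas → iso21 := fun p => if p.1 then Pb p.2 else Jb p.2
def coeff (x : iso21) (p : Bas) : ℝ := if p.1 then x.2 p.2 else x.1 p.2

/-- 2-tensors and 3-tensors over iso(2,1), given by their coefficients in the basis. -/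
abbrev TT2 : Type := Bas → Bas → ℝ
abbrev TT3 : Type := Bas → Bas → Bas → ℝ

def tens (x y : iso21) : TT2 := fun μ ν => coeff x μ * coeff y ν

/-- Structure constants: coefficient of `[T_a, T_c]` on `T_m`. -/
def Cstr (a c m : Bas) : ℝ := coeff (br (basis a) (basis c)) m

/-- The mixed Yang-Baxter expression [[r,s]] = [r₁₂,s₁₃] + [r₁₂,s₂₃] + [r₁₃,s₂₃]. -/
def YB2 (r s : TT2) : TT3 := fun μ ν lam =>
    (∑ a, ∑ c, r a ν * s c lam * Cstr a c μ)
  + (∑ b, ∑ c, r μ b * s c lam * Cstr b c ν)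
  + (∑ b, ∑ d, r μ b * s ν d * Cstr b d lam)

/-- The action of X on a 2-tensor: [X⊗1 + 1⊗X, r]. -/
def act2 (x : iso21) (r : TT2) : TT2 := fun μ ν =>
  (∑ a, r a ν * coeff (br x (basis a)) μ) + (∑ b, r μ b * coeff (br x (basis b)) ν)

/-- The classical r-matrix r = P_a ⊗ J^a. -/
def rPJ : TT2 := fun μ ν => ∑ a, ηm a * tens (Pb a) (Jb a) μ ν

/-- The symmetric part r_S = ½(P_a⊗J^a + J^a⊗P_a). -/
def rSym : TT2 := fun μ ν => (1/2) * ∑ a, ηm a * (tens (Pb a) (Jb a) μ ν + tens (Jb a) (Pb a) μ ν)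

/-- The classical dynamical Yang-Baxter equation at (ψ,α) with dynamical elements
x₁ (paired with ψ) and x₂ (paired with α). -/
def CDYBEat (r : ℝ → ℝ → TT2) (x1 x2 : ℝ → ℝ → iso21) (ψ α : ℝ) : Prop :=
  ∀ μ ν lam : Bas, YB2 (r ψ α) (r ψ α) μ ν lam =
      coeff (x1 ψ α) μ * deriv (fun s => r s α ν lam) ψ
    - coeff (x1 ψ α) ν * deriv (fun s => r s α μ lam) ψ
    + coeff (x1 ψ α) lam * deriv (fun s => r s α μ ν) ψ
    + coeff (x2 ψ α) μ * deriv (fun s => r ψ s ν lam) α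
    - coeff (x2 ψ α) ν * deriv (fun s => r ψ s μ lam) α
    + coeff (x2 ψ α) lam * deriv (fun s => r ψ s μ ν) α

/-- Adjoint action of a Lorentz matrix g on iso(2,1). -/
def adL (g : Matrix (Fin 3) (Fin 3) ℝ) (x : iso21) : iso21 := (g.mulVec x.1, g.mulVec x.2)

/-- Adjoint action of a translation t on iso(2,1): J_a ↦ J_a + ε_{ab}^c t^b P_c, P_a ↦ P_a. -/
def adT (t : V3) (x : iso21) : iso21 :=
  (x.1, fun c => x.2 c + ∑ a, ∑ b, x.1 a * t b * (ηm c * eps a b c))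

/-- The proper orthochronous Lorentz group SO⁺(2,1) as 3×3 matrices. -/
def SOplus : Set (Matrix (Fin 3) (Fin 3) ℝ) :=
  {g | g.transpose * Matrix.diagonal ηm * g = Matrix.diagonal ηm ∧ g.det = 1 ∧ 0 < g 0 0}

/-- The induced action of a linear map on 2-tensors, A⊗A. -/
def Ad2 (A : iso21 → iso21) (r : TT2) : TT2 :=
  fun μ ν => ∑ a : Bas, ∑ b : Bas, r a b * coeff (A (basis a)) μ * coeff (A (basis b)) ν

/-- r(ψ,α) = P_a⊗J^a - V^{bc}(ψ)(P_b⊗J_c - J_c⊗P_b) + ε^{bcd} m_d(ψ,α) P_b⊗P_c. -/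
def rVm (V : ℝ → Matrix (Fin 3) (Fin 3) ℝ) (m : ℝ → ℝ → V3) (ψ α : ℝ) : TT2 := fun μ ν =>
  rPJ μ ν
  - (∑ b, ∑ c, V ψ b c * (tens (Pb b) (Jb c) μ ν - tens (Jb c) (Pb b) μ ν))
  + ∑ b, ∑ c, ∑ d, ηm b * ηm c * eps b c d * m ψ α d * tens (Pb b) (Pb c) μ ν

/-- The vector w defined by ε^{abc} w_c = V^{ab} - V^{ba}. -/
def wOf (V : ℝ → Matrix (Fin 3) (Fin 3) ℝ) (ψ : ℝ) : V3 := fun c =>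
  (1/2) * ∑ a, ∑ b, ηm a * ηm b * eps a b c * (V ψ a b - V ψ b a)

/-- CDYBE condition (i) at (ψ,α), componentwise in (a,b,c). -/
def Cond1At (V : ℝ → Matrix (Fin 3) (Fin 3) ℝ) (m : ℝ → ℝ → V3) (qψ qα : ℝ → V3)
    (ψ α : ℝ) : Prop :=
  ∀ a b c : Fin 3,
    qα ψ a * (∑ d, ηm b * ηm c * eps b c d * deriv (fun s => m ψ s d) α)
    - qψ ψ b * deriv (fun s => V s c a) ψ
    + qψ ψ c * deriv (fun s => V s b a) ψ
    - (∑ d, ∑ g, V ψ b d * V ψ c g * (ηm a * eps d g a))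
    - (∑ d, ∑ g, V ψ d a * V ψ c g * (ηm b * eps d g b))
    + (∑ d, ∑ g, V ψ d a * V ψ b g * (ηm c * eps d g c))
    - (∑ d, V ψ d a * (ηm b * ηm c * eps b c d)) = 0

/-- CDYBE condition (ii) at (ψ,α): q_ψ·∂_ψ m + q_θ·∂_α m + w·m = 0. -/
def Cond2At (V : ℝ → Matrix (Fin 3) (Fin 3) ℝ) (m : ℝ → ℝ → V3) (qψ : ℝ → V3)
    (qθ : ℝ → ℝ → V3) (ψ α : ℝ) : Prop :=
  mdot (qψ ψ) (fun a => deriv (fun s => m s α a) ψ)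
  + mdot (qθ ψ α) (fun a => deriv (fun s => m ψ s a) α)
  + mdot (wOf V ψ) (m ψ α) = 0

def wedgeT (x y : iso21) : TT2 := fun μ ν => tens x y μ ν - tens y x μ ν

/-- The standard dynamical r-matrix for the Cartan subalgebra span{J₀,P₀}. -/
def ra (ψ α : ℝ) : TT2 := fun μ ν =>
  rSym μ ν + (1/2) * Real.tan (ψ/2) * (wedgeT (Pb 1) (Jb 2) μ ν - wedgeT (Pb 2) (Jb 1) μ ν)
  + α / (4 * (Real.cos (ψ/2))^2) * wedgeT (Pb 1) (Pb 2) μ ν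

/-- The standard dynamical r-matrix for the Cartan subalgebra span{J₁,P₁}. -/
def rb (ψ α : ℝ) : TT2 := fun μ ν =>
  rSym μ ν + (1/2) * Real.tanh (ψ/2) * (wedgeT (Pb 2) (Jb 0) μ ν - wedgeT (Pb 0) (Jb 2) μ ν)
  + α / (4 * (Real.cosh (ψ/2))^2) * wedgeT (Pb 2) (Pb 0) μ ν

/-- no element (g,t) of ISO(2,1) = SO⁺(2,1) ⋉ ℝ³ has an adjoint action
mapping the Cartan subalgebra span{P₀,J₀} onto span{P₁,J₁}. -/
theorem stmt4 :
    ¬ ∃ g ∈ SOplus, ∃ t : V3,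
      (fun x => adL g (adT t x)) ''
          ((Submodule.span ℝ ({Pb 0, Jb 0} : Set iso21) : Submodule ℝ iso21) : Set iso21)
        = ((Submodule.span ℝ ({Pb 1, Jb 1} : Set iso21) : Submodule ℝ iso21) : Set iso21) := by
  rintro ⟨g, ⟨hη, -, -⟩, t, himg⟩
  -- the image of Pb 0 lies in the right-hand span
  have hP0 : Pb 0 ∈ (Submodule.span ℝ ({Pb 0, Jb 0} : Set iso21) : Submodule ℝ iso21) :=
    Submodule.subset_span (Set.mem_insert _ _)
  have hmem : adL g (adT t (Pb 0)) ∈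
      (Submodule.span ℝ ({Pb 1, Jb 1} : Set iso21) : Submodule ℝ iso21) := by
    have : adL g (adT t (Pb 0)) ∈
        ((Submodule.span ℝ ({Pb 1, Jb 1} : Set iso21) : Submodule ℝ iso21) : Set iso21) := by
      rw [← himg]; exact ⟨Pb 0, hP0, rfl⟩
    exact this
  -- compute adL g (adT t (Pb 0))
  have hadT : adT t (Pb 0) = Pb 0 := by
    unfold adT Pb Pvec
    simp
  rw [hadT] at hmem
  have hadL : adL g (Pb 0) = (0, g.mulVec (fun i => if i = 0 then 1 else 0)) := by
    unfold adL Pb Pvec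
    simp [Matrix.mulVec_zero]
  rw [hadL] at hmem
  rw [Submodule.mem_span_pair] at hmem
  obtain ⟨m, n, hmn⟩ := hmem
  have h1 := congrArg Prod.fst hmn
  have h2 := congrArg Prod.snd hmn
  have hn : n = 0 := by
    have := congrFun h1 1
    simpa [Pb, Jb, Pvec, Jvec] using this
  have hg : ∀ i, g.mulVec (fun j => if j = 0 then 1 else 0) i = if i = 1 then m else 0 := by
    intro i
    have := congrFun h2 i
    simp [Pb, Jb, Pvec, Jvec, hn] at this
    rw [← this]
  have hgcol : ∀ i, g i 0 = if i = 1 then m else 0 := by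
    intro i
    have := hg i
    rwa [Matrix.mulVec, dotProduct, show (∑ j, g i j * if j = 0 then 1 else 0) = g i 0 by
      simp [Fin.sum_univ_three]] at this
  -- use the Lorentz condition entry (0,0)
  have hη00 := congrFun (congrFun hη 0) 0
  have hlhs : (g.transpose * Matrix.diagonal ηm * g) 0 0 = ∑ i, ηm i * g i 0 * g i 0 := by
    simp [Matrix.mul_apply, Matrix.diagonal, Matrix.transpose_apply, Fin.sum_univ_three]
    ring
  rw [hlhs] at hη00
  have hrhs : (Matrix.diagonal ηm) 0 0 = 1 := by simp [Matrix.diagonal, ηm]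
  rw [hrhs] at hη00
  have : -(m * m) = 1 := by
    rw [← hη00]
    simp [Fin.sum_univ_three, hgcol, ηm]
  nlinarith [sq_nonneg m]
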